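/- Let Ɓ = {(2,1), (3,1), (3,1), (3,1), (4,1), (5,1)}. Then the degree d = 2·(-1) - 2 + 1·1/2 + 3·(1·2/3) + 1·3/4 + 1·4/5 equals 1/20, and the K3 Hilbert series satisfies P_{1/20,Ɓ}(t) = (1-t^18) / ((1-t^3)(1-t^4)(1-t^5)(1-t^6)) in ℚ(t). -/

import Mathlib

/-- The K3 Hilbert series `P_{d,Ɓ}` as an element of `ℚ(t)`, where the basket is
recorded as a list of pairs `(r, b)` (with `b` the inverse mod `r` of the
singularity type `a`), and `\overline{m}` is the least nonnegative residue mod `r`. -/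
noncomputable def K3HilbertSeries (d : ℚ) (B : List (ℕ × ℕ)) : RatFunc ℚ :=
  (1 + RatFunc.X) / (1 - RatFunc.X)
    + RatFunc.X * (1 + RatFunc.X) / (1 - RatFunc.X) ^ 3 * RatFunc.C (d / 2)
    - (B.map (fun p =>
        (1 / (1 - RatFunc.X ^ p.1)) *
          ∑ i ∈ Finset.Icc 1 (p.1 - 1),
            RatFunc.C ((((p.2 * i) % p.1 : ℕ) : ℚ)
                * ((p.1 : ℚ) - (((p.2 * i) % p.1 : ℕ) : ℚ)) / (2 * (p.1 : ℚ)))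
              * RatFunc.X ^ i)).sum

instance : CharZero (RatFunc ℚ) :=
  charZero_of_injective_algebraMap (algebraMap ℚ (RatFunc ℚ)).injective

lemma one_sub_X_pow_ne (n : ℕ) (hn : 0 < n) : (1 - RatFunc.X ^ n : RatFunc ℚ) ≠ 0 := by
  have h : (1 - Polynomial.X ^ n : Polynomial ℚ) ≠ 0 := by
    intro h
    have := congrArg (Polynomial.coeff · n) h
    simp [Polynomial.coeff_one, hn.ne'] at this
  have := RatFunc.algebraMap_ne_zero (K := ℚ) h
  simpa [RatFunc.algebraMap_X] using this

set_option maxHeartbeats 2000000 in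
/-- For the basket `{(2,1), (3,1), (3,1), (3,1), (4,1), (5,1)}`
(each `a = 1`, so each inverse `b = 1`), the degree is
`d = 2·(-1) - 2 + 1·1/2 + 3·(1·2/3) + 1·3/4 + 1·4/5 = 1/20`, and
`P(t) = (1-t^18)/((1-t^3)(1-t^4)(1-t^5)(1-t^6))` in `ℚ(t)` (Reid1(39)). -/
theorem k3_Reid1_39_hilbert_series :
    (2 * (-1 : ℚ) - 2 + 1 * 1 / 2 + 3 * (1 * 2 / 3) + 1 * 3 / 4 + 1 * 4 / 5
        = 1 / 20) ∧
    K3HilbertSeries (1 / 20) [(2, 1), (3, 1), (3, 1), (3, 1), (4, 1), (5, 1)]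
      = (1 - RatFunc.X ^ 18) /
          ((1 - RatFunc.X ^ 3) * (1 - RatFunc.X ^ 4) * (1 - RatFunc.X ^ 5)
            * (1 - RatFunc.X ^ 6)) := by
  refine ⟨by norm_num, ?_⟩
  have h1 := one_sub_X_pow_ne 1 (by norm_num)
  have h2 := one_sub_X_pow_ne 2 (by norm_num)
  have h3 := one_sub_X_pow_ne 3 (by norm_num)
  have h4 := one_sub_X_pow_ne 4 (by norm_num)
  have h5 := one_sub_X_pow_ne 5 (by norm_num)
  have h6 := one_sub_X_pow_ne 6 (by norm_num)
  simp only [pow_one] at h1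
  simp only [K3HilbertSeries, List.map_cons, List.map_nil, List.sum_cons, List.sum_nil,
    show (2:ℕ)-1 = 1 from rfl, show (3:ℕ)-1 = 2 from rfl, show (4:ℕ)-1 = 3 from rfl,
    show (5:ℕ)-1 = 4 from rfl,
    show (Finset.Icc 1 1 : Finset ℕ) = {1} by decide,
    show (Finset.Icc 1 2 : Finset ℕ) = {1,2} by decide,
    show (Finset.Icc 1 3 : Finset ℕ) = {1,2,3} by decide,
    show (Finset.Icc 1 4 : Finset ℕ) = {1,2,3,4} by decide]
  norm_num [Finset.sum_insert, Finset.mem_insert, map_div₀, map_ofNat]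
  set X := (RatFunc.X : RatFunc ℚ) with hX
  set P : RatFunc ℚ := (1-X)^3*(1-X^2)*(1-X^3)*(1-X^4)*(1-X^5) with hP
  have hPne : P ≠ 0 := by
    refine mul_ne_zero (mul_ne_zero (mul_ne_zero (mul_ne_zero (pow_ne_zero _ h1) h2) h3) h4) h5
  rw [show (1+X)/(1-X) = ((1+X)*((1-X)^2*(1-X^2)*(1-X^3)*(1-X^4)*(1-X^5)))/P from by
        rw [div_eq_div_iff h1 hPne]; ring,
      show X*(1+X)/(1-X)^3 * (1/40 : RatFunc ℚ) =
          (1/40*X*(1+X)*((1-X^2)*(1-X^3)*(1-X^4)*(1-X^5)))/P from by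
        rw [div_mul_eq_mul_div, div_eq_div_iff (pow_ne_zero _ h1) hPne]; ring,
      show (1-X^2:RatFunc ℚ)⁻¹ * (1/4*X) =
          (1/4*X*((1-X)^3*(1-X^3)*(1-X^4)*(1-X^5)))/P from by
        rw [inv_mul_eq_div, div_eq_div_iff h2 hPne]; ring,
      show (1-X^3:RatFunc ℚ)⁻¹ * (1/3*X + 1/3*X^2) =
          ((1/3*X + 1/3*X^2)*((1-X)^3*(1-X^2)*(1-X^4)*(1-X^5)))/P from by
        rw [inv_mul_eq_div, div_eq_div_iff h3 hPne]; ring,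
      show (1-X^4:RatFunc ℚ)⁻¹ * (3/8*X + (1/2*X^2 + 3/8*X^3)) =
          ((3/8*X + (1/2*X^2 + 3/8*X^3))*((1-X)^3*(1-X^2)*(1-X^3)*(1-X^5)))/P from by
        rw [inv_mul_eq_div, div_eq_div_iff h4 hPne]; ring,
      show (1-X^5:RatFunc ℚ)⁻¹ * (2/5*X + (3/5*X^2 + (3/5*X^3 + 2/5*X^4))) =
          ((2/5*X + (3/5*X^2 + (3/5*X^3 + 2/5*X^4)))*((1-X)^3*(1-X^2)*(1-X^3)*(1-X^4)))/P
        from by rw [inv_mul_eq_div, div_eq_div_iff h5 hPne]; ring,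
      ← add_div, ← add_div, ← add_div, ← add_div,
      ← add_div, ← add_div, div_sub_div_same,
      div_eq_div_iff hPne (mul_ne_zero (mul_ne_zero (mul_ne_zero h3 h4) h5) h6)]
  ring
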